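/- Let λ > 0 and define f_λ : (−π/2, π/2) → ℝ by f_λ(ψ) = sin ψ · ∫₀^{ψ} (cos t)^{1/λ} dt + λ (cos ψ)^{1+1/λ}. Then f_λ solves the ODE f_λ''(ψ) + f_λ(ψ) = (cos ψ)^{(1−λ)/λ} for all ψ ∈ (−π/2, π/2). -/

import Mathlib

open Real intervalIntegral

noncomputable section

/-- `f_λ(ψ) = sin ψ ∫₀^ψ (cos t)^{1/λ} dt + λ (cos ψ)^{1+1/λ}` -/
def fL (lam p : ℝ) : ℝ :=
  Real.sin p * (∫ t in (0:ℝ)..p, Real.cos t ^ (1 / lam)) + lam * Real.cos p ^ (1 + 1 / lam)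

def gL (lam p : ℝ) : ℝ :=
  Real.cos p * (∫ t in (0:ℝ)..p, Real.cos t ^ (1 / lam)) -
    lam * Real.sin p * Real.cos p ^ (1 / lam)

lemma contc (lam : ℝ) (hlam : 0 < lam) :
    Continuous (fun t : ℝ => Real.cos t ^ (1 / lam)) :=
  Real.continuous_cos.rpow_const (fun x => Or.inr (by positivity))

lemma hasDeriv_fL (lam : ℝ) (hlam : 0 < lam) {p : ℝ}
    (hp : p ∈ Set.Ioo (-(π / 2)) (π / 2)) :
    HasDerivAt (fL lam) (gL lam p) p := by
  have hcos : 0 < Real.cos p := Real.cos_pos_of_mem_Ioo hp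
  have hI : HasDerivAt (fun u : ℝ => ∫ t in (0:ℝ)..u, Real.cos t ^ (1 / lam))
      (Real.cos p ^ (1 / lam)) p :=
    ((contc lam hlam).integral_hasStrictDerivAt 0 p).hasDerivAt
  have h1 : HasDerivAt (fun u : ℝ => Real.sin u * ∫ t in (0:ℝ)..u, Real.cos t ^ (1 / lam))
      (Real.cos p * (∫ t in (0:ℝ)..p, Real.cos t ^ (1 / lam)) +
        Real.sin p * Real.cos p ^ (1 / lam)) p :=
    (Real.hasDerivAt_sin p).mul hI
  have h2 : HasDerivAt (fun u : ℝ => Real.cos u ^ (1 + 1 / lam))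
      (-Real.sin p * (1 + 1 / lam) * Real.cos p ^ (1 + 1 / lam - 1)) p :=
    (Real.hasDerivAt_cos p).rpow_const (Or.inl hcos.ne')
  have h := h1.add (h2.const_mul lam)
  have hexp : 1 + 1 / lam - 1 = 1 / lam := by ring
  rw [hexp] at h
  refine h.congr_deriv ?_
  unfold gL
  field_simp
  ring

lemma hasDeriv_gL (lam : ℝ) (hlam : 0 < lam) {p : ℝ}
    (hp : p ∈ Set.Ioo (-(π / 2)) (π / 2)) :
    HasDerivAt (gL lam) (Real.cos p ^ ((1 - lam) / lam) - fL lam p) p := by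
  have hcos : 0 < Real.cos p := Real.cos_pos_of_mem_Ioo hp
  have hI : HasDerivAt (fun u : ℝ => ∫ t in (0:ℝ)..u, Real.cos t ^ (1 / lam))
      (Real.cos p ^ (1 / lam)) p :=
    ((contc lam hlam).integral_hasStrictDerivAt 0 p).hasDerivAt
  have h1 : HasDerivAt (fun u : ℝ => Real.cos u * ∫ t in (0:ℝ)..u, Real.cos t ^ (1 / lam))
      (-Real.sin p * (∫ t in (0:ℝ)..p, Real.cos t ^ (1 / lam)) +
        Real.cos p * Real.cos p ^ (1 / lam)) p :=
    (Real.hasDerivAt_cos p).mul hI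
  have h2 : HasDerivAt (fun u : ℝ => Real.cos u ^ (1 / lam))
      (-Real.sin p * (1 / lam) * Real.cos p ^ (1 / lam - 1)) p :=
    (Real.hasDerivAt_cos p).rpow_const (Or.inl hcos.ne')
  have h3 := ((Real.hasDerivAt_sin p).mul h2).const_mul lam
  simp only [← mul_assoc] at h3
  have h := h1.sub h3
  have hinv : lam * (1 / lam) = 1 := by field_simp
  have e2 : (1 - lam) / lam = 1 / lam - 1 := by field_simp
  have epow : Real.cos p * Real.cos p = Real.cos p ^ ((2:ℕ):ℝ) := by
    rw [Real.rpow_natCast]; ring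
  have e3 : Real.cos p ^ (1 + 1 / lam) =
      Real.cos p ^ (1 / lam - 1) * (Real.cos p * Real.cos p) := by
    rw [epow, ← Real.rpow_add hcos]; congr 1; push_cast; ring
  have e1 : Real.cos p * Real.cos p ^ (1 / lam) =
      Real.cos p ^ (1 / lam - 1) * (Real.cos p * Real.cos p) := by
    rw [← e3, Real.rpow_add hcos, Real.rpow_one]
  have hs : Real.sin p ^ 2 + Real.cos p ^ 2 = 1 := Real.sin_sq_add_cos_sq p
  refine (h.congr_of_eventuallyEq (Filter.Eventually.of_forall fun y => ?_)).congr_deriv ?_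
  · simp only [gL, Pi.sub_apply, Pi.mul_apply]; ring
  unfold fL
  rw [e2, e1, e3]
  set A := Real.cos p ^ (1 / lam - 1) with hA
  linear_combination A * hs + Real.sin p ^ 2 * A * hinv

theorem stmt15 (lam : ℝ) (hlam : 0 < lam) :
    ∀ p ∈ Set.Ioo (-(π / 2)) (π / 2),
      deriv (deriv (fL lam)) p + fL lam p = Real.cos p ^ ((1 - lam) / lam) := by
  intro p hp
  have hev : deriv (fL lam) =ᶠ[nhds p] gL lam :=
    Filter.eventuallyEq_of_mem (isOpen_Ioo.mem_nhds hp)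
      (fun x hx => (hasDeriv_fL lam hlam hx).deriv)
  rw [Filter.EventuallyEq.deriv_eq hev, (hasDeriv_gL lam hlam hp).deriv]
  ring
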